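/- (Forward skew-product bound) Let â_{i,i−1} > 0 and b̂_{i,i−1} be declared relative skews and offsets along a chain 1,…,n, and write â_{j,1} := Π_{i=2}^{j} â_{i,i−1}. Suppose â_{j,1} ≥ 1 for all 2 ≤ j ≤ n. Suppose the time-stamps satisfy the parameter-consistency condition τ^{i,l} = â_{i,i−1}·τ^{i−1,r} + b̂_{i,i−1} for 2 ≤ i ≤ n, and causality τ^{i,l} ≤ τ^{i,r} for all i. Then Σ_{i=2}^{n} (τ^{i,l} − τ^{i−1,r}) ≤ ((â_{n,1} − 1)/â_{n,1})·τ^{n,l} + Σ_{i=2}^{n} b̂_{i,i−1}/â_{i,1}. -/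

import Mathlib

/-- Forward skew-product bound: with declared skews
â i = â_{i,i−1} > 0 and offsets b̂ i = b̂_{i,i−1} along a chain 1,…,n,
skew products â_{j,1} = ∏_{i=2}^{j} â_{i,i−1} all ≥ 1, parameter consistency
l i = â i · r (i−1) + b̂ i, and causality l i ≤ r i, we have
Σ_{i=2}^{n} (l i − r (i−1))
  ≤ ((â_{n,1} − 1)/â_{n,1})·l n + Σ_{i=2}^{n} b̂_{i,i−1}/â_{i,1}. -/
theorem stmt5 (n : ℕ) (hn : 2 ≤ n) (ahat bhat l r : ℕ → ℝ)
    (hahat : ∀ i ∈ Finset.Icc 2 n, 0 < ahat i)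
    (hprod : ∀ j ∈ Finset.Icc 2 n, 1 ≤ ∏ i ∈ Finset.Icc 2 j, ahat i)
    (hcons : ∀ i ∈ Finset.Icc 2 n, l i = ahat i * r (i - 1) + bhat i)
    (hcaus : ∀ i, l i ≤ r i) :
    (∑ i ∈ Finset.Icc 2 n, (l i - r (i - 1)))
      ≤ ((∏ i ∈ Finset.Icc 2 n, ahat i) - 1) / (∏ i ∈ Finset.Icc 2 n, ahat i) * l n
        + ∑ i ∈ Finset.Icc 2 n, bhat i / (∏ k ∈ Finset.Icc 2 i, ahat k) := by
  induction n, hn using Nat.le_induction with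
  | base =>
    have h2 : (2 : ℕ) ∈ Finset.Icc 2 2 := by simp
    have ha := hahat 2 h2
    have hc := hcons 2 h2
    norm_num at hc
    simp only [Finset.Icc_self, Finset.sum_singleton, Finset.prod_singleton]
    norm_num
    rw [hc]
    have : ahat 2 * r 1 + bhat 2 - r 1
        = (ahat 2 - 1) / ahat 2 * (ahat 2 * r 1 + bhat 2) + bhat 2 / ahat 2 := by
      field_simp
      ring
    linarith [this.le]
  | succ n hn ih =>
    have hsub : Finset.Icc 2 n ⊆ Finset.Icc 2 (n + 1) :=
      Finset.Icc_subset_Icc_right (by omega)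
    have ih' := ih (fun i hi => hahat i (hsub hi)) (fun j hj => hprod j (hsub hj))
      (fun i hi => hcons i (hsub hi))
    have h2 : 2 ≤ n + 1 := by omega
    rw [Finset.sum_Icc_succ_top h2, Finset.sum_Icc_succ_top h2,
      Finset.prod_Icc_succ_top h2]
    set A := ∏ i ∈ Finset.Icc 2 n, ahat i with hA
    have hA1 : 1 ≤ A := hprod n (by simp [Finset.mem_Icc]; omega)
    have hA0 : 0 < A := zero_lt_one.trans_le hA1
    have ha : 0 < ahat (n + 1) := hahat (n + 1) (by simp [Finset.mem_Icc]; omega)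
    have hc : l (n + 1) = ahat (n + 1) * r n + bhat (n + 1) := by
      have := hcons (n + 1) (by simp [Finset.mem_Icc]; omega)
      simpa using this
    have heq : (A - 1) / A * r n + (l (n + 1) - r n)
        = (A * ahat (n + 1) - 1) / (A * ahat (n + 1)) * l (n + 1)
          + bhat (n + 1) / (A * ahat (n + 1)) := by
      rw [hc]
      field_simp
      ring
    have hmono : (A - 1) / A * l n ≤ (A - 1) / A * r n :=
      mul_le_mul_of_nonneg_left (hcaus n) (div_nonneg (by linarith) hA0.le)
    simp only [Nat.add_sub_cancel]
    linarith
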